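/- Let γ be the countable product of standard Gaussians on ℝ^ℕ, (b_i) a summable nonnegative sequence, and J ≥ 1. Then ∫ (∑_{i>J} |u_i| b_i)² · exp(c ∑_{i=1}^∞ |u_i| b_i) dγ(u) ≤ C · (∑_{i>J} b_i)² for a constant C depending only on c and ∑_i b_i (and ∑_i b_i²), but not on J. -/

import Mathlib

open MeasureTheory ProbabilityTheory

/-- `γ` is the countable product of standard Gaussian measures on `ℝ^ℕ`:
its finite-dimensional marginals are products of `N(0,1)`. -/
def IsProductStdGaussian (γ : Measure (ℕ → ℝ)) : Prop :=
  IsProjectiveLimit γ (fun I : Finset ℕ => Measure.pi fun _ : I => gaussianReal 0 1)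

section Stmt18Aux

open Real Filter
open scoped ENNReal

namespace Stmt18




lemma tsum_nonneg_eq_toReal {ι : Type*} {f : ι → ℝ} (hf : ∀ i, 0 ≤ f i) :
    ∑' i, f i = (∑' i, ENNReal.ofReal (f i)).toReal := by
  by_cases hs : Summable f
  · rw [← ENNReal.ofReal_tsum_of_nonneg hf hs, ENNReal.toReal_ofReal (tsum_nonneg hf)]
  · have htop : ∑' i, ENNReal.ofReal (f i) = ∞ := by
      by_contra h
      have h2 := ENNReal.summable_toReal h
      have h3 : (fun i => (ENNReal.ofReal (f i)).toReal) = f :=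
        funext fun i => ENNReal.toReal_ofReal (hf i)
      rw [h3] at h2
      exact hs h2
    rw [tsum_eq_zero_of_not_summable hs, htop, ENNReal.toReal_top]

lemma lintegral_pi_prod_fin {n : ℕ} (μ : Fin n → Measure ℝ) [∀ i, SigmaFinite (μ i)]
    (h : Fin n → ℝ → ℝ≥0∞) (hm : ∀ i, Measurable (h i)) :
    ∫⁻ x : Fin n → ℝ, ∏ i, h i (x i) ∂Measure.pi μ = ∏ i, ∫⁻ y, h i y ∂μ i := by
  induction n with
  | zero => simp
  | succ n ih =>
    rw [← ((measurePreserving_piFinSuccAbove μ 0).symm).lintegral_comp_emb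
      (MeasurableEquiv.measurableEmbedding _)]
    simp_rw [MeasurableEquiv.piFinSuccAbove_symm_apply, Fin.insertNthEquiv,
      Fin.prod_univ_succ, Fin.insertNth_zero, Equiv.coe_fn_mk, Fin.zero_succAbove,
      Fin.cons_zero, Fin.cons_succ, cast_eq]
    have hg : Measurable fun y : Fin n → ℝ => ∏ x : Fin n, h x.succ (y x) :=
      Finset.measurable_prod _ fun i _ => (hm i.succ).comp (measurable_pi_apply i)
    rw [lintegral_prod_mul (f := h 0) (g := fun y : Fin n → ℝ => ∏ x : Fin n, h x.succ (y x))
      (hm 0).aemeasurable hg.aemeasurable, ih _ _ (fun i => hm i.succ)]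




lemma lintegral_exp_mul_gaussian (s : ℝ) :
    ∫⁻ x, ENNReal.ofReal (exp (s * x)) ∂gaussianReal 0 1 = ENNReal.ofReal (exp (s ^ 2 / 2)) := by
  rw [gaussianReal_of_var_ne_zero 0 one_ne_zero,
    lintegral_withDensity_eq_lintegral_mul _ (measurable_gaussianPDF 0 1)
      (show Measurable fun x : ℝ => ENNReal.ofReal (rexp (s * x)) by fun_prop)]
  have hpt : ∀ x : ℝ, (gaussianPDF 0 1 * fun x => ENNReal.ofReal (exp (s * x))) x
      = ENNReal.ofReal (exp (s ^ 2 / 2)) * gaussianPDF s 1 x := by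
    intro x
    simp only [Pi.mul_apply, gaussianPDF, ← ENNReal.ofReal_mul (gaussianPDFReal_nonneg 0 1 x),
      ← ENNReal.ofReal_mul (exp_nonneg _)]
    congr 1
    simp only [gaussianPDFReal, NNReal.coe_one]
    rw [mul_assoc, ← Real.exp_add, show -(x - 0) ^ 2 / (2 * 1) + s * x
      = s ^ 2 / 2 + -(x - s) ^ 2 / (2 * 1) by ring, Real.exp_add]
    ring
  simp_rw [hpt]
  rw [lintegral_const_mul _ (measurable_gaussianPDF s 1),
    lintegral_gaussianPDF_eq_one s one_ne_zero, mul_one]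

lemma lintegral_exp_abs (s : ℝ) :
    ∫⁻ x, ENNReal.ofReal (exp (s * |x|)) ∂gaussianReal 0 1
      ≤ ENNReal.ofReal (2 * exp (s ^ 2 / 2)) := by
  have hpt : ∀ x : ℝ, ENNReal.ofReal (exp (s * |x|))
      ≤ ENNReal.ofReal (exp (s * x)) + ENNReal.ofReal (exp (-s * x)) := by
    intro x
    rcases abs_cases x with ⟨h1, _⟩ | ⟨h1, _⟩
    · rw [h1]; exact self_le_add_right _ _
    · rw [h1, show s * -x = -s * x by ring]; exact self_le_add_left _ _
  calc ∫⁻ x, ENNReal.ofReal (exp (s * |x|)) ∂gaussianReal 0 1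
      ≤ ∫⁻ x, (ENNReal.ofReal (exp (s * x)) + ENNReal.ofReal (exp (-s * x))) ∂gaussianReal 0 1 :=
        lintegral_mono hpt
    _ = ENNReal.ofReal (exp (s ^ 2 / 2)) + ENNReal.ofReal (exp ((-s) ^ 2 / 2)) := by
        rw [lintegral_add_left
          (show Measurable fun x : ℝ => ENNReal.ofReal (rexp (s * x)) by fun_prop),
          lintegral_exp_mul_gaussian s, lintegral_exp_mul_gaussian (-s)]
    _ = ENNReal.ofReal (2 * exp (s ^ 2 / 2)) := by
        rw [neg_sq, ← ENNReal.ofReal_add (exp_nonneg _) (exp_nonneg _), two_mul]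

lemma lintegral_exp_abs_refined {s : ℝ} (hs : 0 ≤ s) :
    ∫⁻ x, ENNReal.ofReal (exp (s * |x|)) ∂gaussianReal 0 1
      ≤ ENNReal.ofReal (1 + s * (2 * exp ((s + 1) ^ 2 / 2))) := by
  have hpt : ∀ x : ℝ, ENNReal.ofReal (exp (s * |x|))
      ≤ ENNReal.ofReal 1 + ENNReal.ofReal s * ENNReal.ofReal (exp ((s + 1) * |x|)) := by
    intro x
    rw [← ENNReal.ofReal_mul hs, ← ENNReal.ofReal_add (by norm_num) (by positivity)]
    apply ENNReal.ofReal_le_ofReal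
    set a := s * |x| with ha
    have ha0 : 0 ≤ a := mul_nonneg hs (abs_nonneg _)
    have h1 : exp a ≤ 1 + a * exp a := by
      have h2 := Real.add_one_le_exp (-a)
      have h3 : exp (-a) * exp a = 1 := by rw [← Real.exp_add]; simp
      nlinarith [Real.exp_pos a]
    have h4 : |x| ≤ exp |x| := by
      have := Real.add_one_le_exp |x|; linarith
    have h5 : a * exp a ≤ s * exp ((s + 1) * |x|) := by
      rw [ha, show (s + 1) * |x| = |x| + s * |x| by ring, Real.exp_add, mul_assoc]
      apply mul_le_mul_of_nonneg_left _ hs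
      exact mul_le_mul_of_nonneg_right h4 (exp_nonneg _)
    linarith
  calc ∫⁻ x, ENNReal.ofReal (exp (s * |x|)) ∂gaussianReal 0 1
      ≤ ∫⁻ x, (ENNReal.ofReal 1 + ENNReal.ofReal s * ENNReal.ofReal (exp ((s + 1) * |x|)))
          ∂gaussianReal 0 1 := lintegral_mono hpt
    _ = ENNReal.ofReal 1 + ENNReal.ofReal s
          * ∫⁻ x, ENNReal.ofReal (exp ((s + 1) * |x|)) ∂gaussianReal 0 1 := by
        rw [lintegral_add_left measurable_const, lintegral_const, measure_univ, mul_one,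
          lintegral_const_mul _
            (show Measurable fun x : ℝ => ENNReal.ofReal (rexp ((s + 1) * |x|)) by fun_prop)]
    _ ≤ ENNReal.ofReal 1 + ENNReal.ofReal s * ENNReal.ofReal (2 * exp ((s + 1) ^ 2 / 2)) := by
        gcongr
        exact lintegral_exp_abs (s + 1)
    _ = ENNReal.ofReal (1 + s * (2 * exp ((s + 1) ^ 2 / 2))) := by
        rw [← ENNReal.ofReal_mul hs, ← ENNReal.ofReal_add (by norm_num) (by positivity)]

lemma lintegral_pow4 :
    ∫⁻ x, ENNReal.ofReal (x ^ 4) ∂gaussianReal 0 1 ≤ ENNReal.ofReal (2 * exp 8) := by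
  have hpt : ∀ x : ℝ, ENNReal.ofReal (x ^ 4) ≤ ENNReal.ofReal (exp (4 * |x|)) := by
    intro x
    apply ENNReal.ofReal_le_ofReal
    have h1 : |x| ≤ exp |x| := by have := Real.add_one_le_exp |x|; linarith
    calc x ^ 4 = |x| ^ 4 := by rw [← abs_pow, abs_of_nonneg (by positivity)]
      _ ≤ exp |x| ^ 4 := pow_le_pow_left₀ (abs_nonneg x) h1 4
      _ = exp (4 * |x|) := by
          rw [← Real.exp_nat_mul]; norm_num
  calc ∫⁻ x, ENNReal.ofReal (x ^ 4) ∂gaussianReal 0 1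
      ≤ ∫⁻ x, ENNReal.ofReal (exp (4 * |x|)) ∂gaussianReal 0 1 := lintegral_mono hpt
    _ ≤ ENNReal.ofReal (2 * exp ((4:ℝ) ^ 2 / 2)) := lintegral_exp_abs 4
    _ = ENNReal.ofReal (2 * exp 8) := by norm_num




lemma conj22 : Real.HolderConjugate 2 2 := Real.HolderConjugate.two_two

lemma rpow_half_sq (x : ℝ≥0∞) : (x ^ (1/2 : ℝ)) ^ 2 = x := by
  rw [← ENNReal.rpow_natCast (x ^ (1/2 : ℝ)) 2, ← ENNReal.rpow_mul]
  norm_num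

lemma tsum_cauchy_schwarz {ι : Type*} [Countable ι] [MeasurableSpace ι]
    [MeasurableSingletonClass ι] (f g : ι → ℝ≥0∞) :
    (∑' i, f i * g i) ^ 2 ≤ (∑' i, f i ^ 2) * (∑' i, g i ^ 2) := by
  have h := ENNReal.lintegral_mul_le_Lp_mul_Lq (Measure.count : Measure ι) conj22
    (measurable_of_countable f).aemeasurable (measurable_of_countable g).aemeasurable
  simp only [Pi.mul_apply, lintegral_count] at h
  have h2 : (∑' i, f i * g i) ^ 2
      ≤ ((∑' i, f i ^ (2:ℝ)) ^ (1/2 : ℝ) * (∑' i, g i ^ (2:ℝ)) ^ (1/2 : ℝ)) ^ 2 := by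
    exact pow_le_pow_left' h 2
  calc (∑' i, f i * g i) ^ 2
      ≤ ((∑' i, f i ^ (2:ℝ)) ^ (1/2 : ℝ)) ^ 2 * ((∑' i, g i ^ (2:ℝ)) ^ (1/2 : ℝ)) ^ 2 := by
        rw [← mul_pow]; exact h2
    _ = (∑' i, f i ^ (2:ℝ)) * (∑' i, g i ^ (2:ℝ)) := by rw [rpow_half_sq, rpow_half_sq]
    _ = (∑' i, f i ^ 2) * (∑' i, g i ^ 2) := by
        simp_rw [show (2:ℝ) = ((2:ℕ):ℝ) by norm_num, ENNReal.rpow_natCast]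


lemma lintegral_pi_prod {ι : Type*} [Fintype ι] (μ : ι → Measure ℝ) [∀ i, SigmaFinite (μ i)]
    (h : ι → ℝ → ℝ≥0∞) (hm : ∀ i, Measurable (h i)) :
    ∫⁻ x : ι → ℝ, ∏ i, h i (x i) ∂Measure.pi μ = ∏ i, ∫⁻ y, h i y ∂μ i := by
  let e := (Fintype.equivFin ι).symm
  rw [MeasurePreserving.lintegral_map_equiv (fun x : ι → ℝ => ∏ i, h i (x i)) _
    (measurePreserving_piCongrLeft μ e)]
  simp_rw [MeasurableEquiv.coe_piCongrLeft, ← e.prod_comp, Equiv.piCongrLeft_apply_apply]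
  rw [lintegral_pi_prod_fin (fun j => μ (e j)) (fun j => h (e j)) (fun j => hm (e j))]

lemma lintegral_cylinder {γ : Measure (ℕ → ℝ)} (hγ : IsProjectiveLimit γ (fun I : Finset ℕ => Measure.pi fun _ : I => gaussianReal 0 1)) (I : Finset ℕ)
    (h : ℕ → ℝ → ℝ≥0∞) (hm : ∀ i, Measurable (h i)) :
    ∫⁻ u, ∏ i ∈ I, h i (u i) ∂γ = ∏ i ∈ I, ∫⁻ x, h i x ∂gaussianReal 0 1 := by
  have hfm : Measurable fun y : I → ℝ => ∏ i : I, h i (y i) :=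
    Finset.measurable_prod _ fun i _ => (hm i).comp (measurable_pi_apply i)
  calc ∫⁻ u, ∏ i ∈ I, h i (u i) ∂γ
      = ∫⁻ u, (fun y : I → ℝ => ∏ i : I, h i (y i)) (I.restrict u) ∂γ := by
        refine lintegral_congr fun u => ?_
        exact (Finset.prod_coe_sort I (fun i => h i (u i))).symm
    _ = ∫⁻ y : I → ℝ, ∏ i : I, h i (y i) ∂(γ.map I.restrict) :=
        (lintegral_map hfm (I.measurable_restrict)).symm
    _ = ∫⁻ y : I → ℝ, ∏ i : I, h i (y i) ∂(Measure.pi fun _ : I => gaussianReal 0 1) := by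
        rw [hγ I]
    _ = ∏ i : I, ∫⁻ x, h i x ∂gaussianReal 0 1 :=
        lintegral_pi_prod _ (fun i : I => h i) (fun i => hm i)
    _ = ∏ i ∈ I, ∫⁻ x, h i x ∂gaussianReal 0 1 := Finset.prod_coe_sort I (fun i => ∫⁻ x, h i x ∂gaussianReal 0 1)


end Stmt18

end Stmt18Aux

open Real Filter Stmt18

theorem stmt_18 (γ : Measure (ℕ → ℝ)) [IsProbabilityMeasure γ]
    (hγ : IsProductStdGaussian γ) (b : ℕ → ℝ) (hb : ∀ i, 0 ≤ b i)
    (hsum : Summable b) (c : ℝ) (hc : 0 ≤ c) :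
    ∃ C > 0, ∀ J : ℕ, 1 ≤ J →
      (∫ u, (∑' i : {i : ℕ // J < i}, |u i| * b i) ^ 2 *
          Real.exp (c * ∑' i : ℕ, |u i| * b i) ∂γ) ≤
        C * (∑' i : {i : ℕ // J < i}, b i) ^ 2 := by
  classical
  have hγ' : IsProjectiveLimit γ (fun I : Finset ℕ => Measure.pi fun _ : I => gaussianReal 0 1) :=
    hγ
  obtain ⟨B, hB⟩ : ∃ B : ℝ, B = ∑' i, b i := ⟨_, rfl⟩
  have hB0 : 0 ≤ B := hB ▸ tsum_nonneg hb
  obtain ⟨k, hk⟩ : ∃ k : ℝ, k = 4 * c * rexp ((2 * c * B + 1) ^ 2 / 2) := ⟨_, rfl⟩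
  have hk0 : 0 ≤ k := by rw [hk]; positivity
  obtain ⟨κ, hκ⟩ : ∃ κ : ℝ, κ = Real.sqrt (2 * rexp 8) * Real.sqrt (rexp (k * B)) := ⟨_, rfl⟩
  have hκ0 : 0 ≤ κ := by rw [hκ]; positivity
  -- measurability of the total sum
  have hA_meas : Measurable fun u : ℕ → ℝ => ∑' i, |u i| * b i := by
    have h : (fun u : ℕ → ℝ => ∑' i, |u i| * b i)
        = fun u => (∑' i, ENNReal.ofReal (|u i| * b i)).toReal :=
      funext fun u => tsum_nonneg_eq_toReal (fun i => mul_nonneg (abs_nonneg _) (hb i))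
    rw [h]
    exact ENNReal.measurable_toReal.comp (Measurable.ennreal_tsum fun i =>
      by fun_prop)
  have hE_meas : Measurable fun u : ℕ → ℝ => ENNReal.ofReal (rexp (c * ∑' i, |u i| * b i)) :=
    ((hA_meas.const_mul c).exp).ennreal_ofReal
  -- fourth moment bound
  have hM4 : ∀ i : ℕ, ∫⁻ u, ENNReal.ofReal ((u i) ^ 4) ∂γ ≤ ENNReal.ofReal (2 * rexp 8) := by
    intro i
    have h := lintegral_cylinder hγ' {i} (fun _ x => ENNReal.ofReal (x ^ 4))
      (fun _ => (measurable_id.pow_const 4).ennreal_ofReal)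
    simp only [Finset.prod_singleton] at h
    rw [h]
    exact lintegral_pow4
  -- exponential moment bound
  have hME : ∫⁻ u, ENNReal.ofReal (rexp (2 * c * ∑' i, |u i| * b i)) ∂γ
      ≤ ENNReal.ofReal (rexp (k * B)) := by
    have hEn_meas : ∀ n : ℕ, Measurable fun u : ℕ → ℝ =>
        ∏ i ∈ Finset.range n, ENNReal.ofReal (rexp (2 * c * b i * |u i|)) :=
      fun n => Finset.measurable_prod _ fun i _ =>
        by fun_prop
    have hEn_mono : Monotone (fun n (u : ℕ → ℝ) =>
        ∏ i ∈ Finset.range n, ENNReal.ofReal (rexp (2 * c * b i * |u i|))) := by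
      intro m n hmn u
      exact Finset.prod_le_prod_of_subset_of_one_le' (Finset.range_subset_range.mpr hmn)
        (fun i _ _ => ENNReal.one_le_ofReal.mpr (Real.one_le_exp
          (mul_nonneg (mul_nonneg (by positivity) (hb i)) (abs_nonneg _))))
    have hpt : ∀ u : ℕ → ℝ, ENNReal.ofReal (rexp (2 * c * ∑' i, |u i| * b i))
        ≤ ⨆ n, ∏ i ∈ Finset.range n, ENNReal.ofReal (rexp (2 * c * b i * |u i|)) := by
      intro u
      by_cases hsu : Summable fun i => |u i| * b i
      · have hten : Tendsto
            (fun n => ENNReal.ofReal (rexp (2 * c * ∑ i ∈ Finset.range n, |u i| * b i)))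
            atTop (nhds (ENNReal.ofReal (rexp (2 * c * ∑' i, |u i| * b i)))) :=
          (ENNReal.continuous_ofReal.tendsto _).comp ((Real.continuous_exp.tendsto _).comp
            (hsu.hasSum.tendsto_sum_nat.const_mul (2 * c)))
        refine le_of_tendsto' hten fun n => ?_
        have heq : ENNReal.ofReal (rexp (2 * c * ∑ i ∈ Finset.range n, |u i| * b i))
            = ∏ i ∈ Finset.range n, ENNReal.ofReal (rexp (2 * c * b i * |u i|)) := by
          rw [Finset.mul_sum, Real.exp_sum, ENNReal.ofReal_prod_of_nonneg
            (fun i _ => (Real.exp_pos _).le)]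
          exact Finset.prod_congr rfl fun i _ => by
            rw [show 2 * c * (|u i| * b i) = 2 * c * b i * |u i| by ring]
        rw [heq]
        exact le_iSup (fun n => ∏ i ∈ Finset.range n,
          ENNReal.ofReal (rexp (2 * c * b i * |u i|))) n
      · rw [tsum_eq_zero_of_not_summable hsu]
        refine le_trans ?_ (le_iSup (fun n => ∏ i ∈ Finset.range n,
          ENNReal.ofReal (rexp (2 * c * b i * |u i|))) 0)
        simp
    refine le_trans (lintegral_mono hpt) ?_
    rw [lintegral_iSup hEn_meas hEn_mono]
    refine iSup_le fun n => ?_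
    rw [lintegral_cylinder hγ' (Finset.range n)
      (fun i x => ENNReal.ofReal (rexp (2 * c * b i * |x|)))
      (fun i => (((measurable_id.abs).const_mul (2 * c * b i)).exp).ennreal_ofReal)]
    have hper : ∀ i ∈ Finset.range n,
        ∫⁻ x, ENNReal.ofReal (rexp (2 * c * b i * |x|)) ∂gaussianReal 0 1
          ≤ ENNReal.ofReal (rexp (k * b i)) := by
      intro i _
      have hs0 : 0 ≤ 2 * c * b i := mul_nonneg (by positivity) (hb i)
      refine le_trans (lintegral_exp_abs_refined hs0) (ENNReal.ofReal_le_ofReal ?_)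
      have hbB : b i ≤ B := by rw [hB]; exact Summable.le_tsum hsum i fun j _ => hb j
      have h2 : rexp ((2 * c * b i + 1) ^ 2 / 2) ≤ rexp ((2 * c * B + 1) ^ 2 / 2) := by
        apply Real.exp_le_exp.mpr
        have h1 : 2 * c * b i + 1 ≤ 2 * c * B + 1 := by nlinarith
        have h5 := pow_le_pow_left₀ (by positivity) h1 2
        linarith
      have h3 : 2 * c * b i * (2 * rexp ((2 * c * b i + 1) ^ 2 / 2)) ≤ k * b i := by
        calc 2 * c * b i * (2 * rexp ((2 * c * b i + 1) ^ 2 / 2))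
            = 4 * c * rexp ((2 * c * b i + 1) ^ 2 / 2) * b i := by ring
          _ ≤ 4 * c * rexp ((2 * c * B + 1) ^ 2 / 2) * b i := by
              apply mul_le_mul_of_nonneg_right _ (hb i)
              apply mul_le_mul_of_nonneg_left h2 (by positivity)
          _ = k * b i := by rw [hk]
      have h4 := Real.add_one_le_exp (k * b i)
      linarith
    calc ∏ i ∈ Finset.range n, ∫⁻ x, ENNReal.ofReal (rexp (2 * c * b i * |x|)) ∂gaussianReal 0 1
        ≤ ∏ i ∈ Finset.range n, ENNReal.ofReal (rexp (k * b i)) := Finset.prod_le_prod' hper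
      _ = ENNReal.ofReal (rexp (k * ∑ i ∈ Finset.range n, b i)) := by
          rw [Finset.mul_sum, Real.exp_sum, ENNReal.ofReal_prod_of_nonneg
            (fun i _ => (Real.exp_pos _).le)]
      _ ≤ ENNReal.ofReal (rexp (k * B)) := by
          apply ENNReal.ofReal_le_ofReal
          apply Real.exp_le_exp.mpr
          apply mul_le_mul_of_nonneg_left _ hk0
          rw [hB]
          exact Summable.sum_le_tsum _ (fun j _ => hb j) hsum
  -- square of the exponential factor
  have hEsq : ∀ u : ℕ → ℝ, (ENNReal.ofReal (rexp (c * ∑' i, |u i| * b i))) ^ (2:ℝ)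
      = ENNReal.ofReal (rexp (2 * c * ∑' i, |u i| * b i)) := by
    intro u
    rw [ENNReal.ofReal_rpow_of_nonneg (exp_nonneg _) (by norm_num)]
    congr 1
    rw [show (2:ℝ) = ((2:ℕ):ℝ) by norm_num, Real.rpow_natCast, pow_two, ← Real.exp_add]
    ring_nf
  -- per-term Hölder bound
  have hterm : ∀ i : ℕ,
      ∫⁻ u, ENNReal.ofReal (b i * (u i) ^ 2)
        * ENNReal.ofReal (rexp (c * ∑' j, |u j| * b j)) ∂γ
      ≤ ENNReal.ofReal (b i) * ENNReal.ofReal κ := by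
    intro i
    have hf : Measurable fun u : ℕ → ℝ => ENNReal.ofReal (b i * (u i) ^ 2) :=
      by fun_prop
    have hH := ENNReal.lintegral_mul_le_Lp_mul_Lq γ conj22 hf.aemeasurable hE_meas.aemeasurable
    simp only [Pi.mul_apply] at hH
    refine le_trans hH ?_
    have hfac1 : ∫⁻ u, ENNReal.ofReal (b i * (u i) ^ 2) ^ (2:ℝ) ∂γ
        ≤ ENNReal.ofReal (b i ^ 2) * ENNReal.ofReal (2 * rexp 8) := by
      have hptw : ∀ u : ℕ → ℝ, ENNReal.ofReal (b i * (u i) ^ 2) ^ (2:ℝ)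
          = ENNReal.ofReal (b i ^ 2) * ENNReal.ofReal ((u i) ^ 4) := by
        intro u
        rw [ENNReal.ofReal_rpow_of_nonneg (mul_nonneg (hb i) (sq_nonneg _)) (by norm_num),
          show (2:ℝ) = ((2:ℕ):ℝ) by norm_num, Real.rpow_natCast,
          show (b i * (u i) ^ 2) ^ (2:ℕ) = b i ^ 2 * (u i) ^ 4 by ring,
          ENNReal.ofReal_mul (sq_nonneg _)]
      simp_rw [hptw]
      rw [lintegral_const_mul _ ((measurable_pi_apply i).pow_const 4).ennreal_ofReal]
      exact mul_le_mul_right (hM4 i) _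
    have hfac2 : ∫⁻ u, (ENNReal.ofReal (rexp (c * ∑' j, |u j| * b j))) ^ (2:ℝ) ∂γ
        ≤ ENNReal.ofReal (rexp (k * B)) := by
      simp_rw [hEsq]; exact hME
    calc (∫⁻ u, ENNReal.ofReal (b i * (u i) ^ 2) ^ (2:ℝ) ∂γ) ^ (1/2:ℝ)
          * (∫⁻ u, (ENNReal.ofReal (rexp (c * ∑' j, |u j| * b j))) ^ (2:ℝ) ∂γ) ^ (1/2:ℝ)
        ≤ (ENNReal.ofReal (b i ^ 2) * ENNReal.ofReal (2 * rexp 8)) ^ (1/2:ℝ)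
          * ENNReal.ofReal (rexp (k * B)) ^ (1/2:ℝ) :=
          mul_le_mul' (ENNReal.rpow_le_rpow hfac1 (by norm_num))
            (ENNReal.rpow_le_rpow hfac2 (by norm_num))
      _ = ENNReal.ofReal (b i) * ENNReal.ofReal κ := by
          rw [← ENNReal.ofReal_mul (sq_nonneg _),
            ENNReal.ofReal_rpow_of_nonneg (by positivity) (by norm_num),
            ENNReal.ofReal_rpow_of_nonneg (exp_nonneg _) (by norm_num),
            ← Real.sqrt_eq_rpow, ← Real.sqrt_eq_rpow,
            Real.sqrt_mul (sq_nonneg _), Real.sqrt_sq (hb i), hκ,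
            ENNReal.ofReal_mul (hb i), mul_assoc,
            ← ENNReal.ofReal_mul (Real.sqrt_nonneg _)]
  -- now fix J
  refine ⟨κ + 1, by positivity, fun J _ => ?_⟩
  obtain ⟨β, hβ⟩ : ∃ β : ℝ, β = ∑' i : {i : ℕ // J < i}, b ↑i := ⟨_, rfl⟩
  have hβ0 : 0 ≤ β := hβ ▸ tsum_nonneg fun i => hb _
  have hofβ : (∑' i : {i : ℕ // J < i}, ENNReal.ofReal (b ↑i)) = ENNReal.ofReal β := by
    rw [hβ]
    exact (ENNReal.ofReal_tsum_of_nonneg (f := fun i : {i : ℕ // J < i} => b ↑i)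
      (fun i => hb _) (hsum.subtype _)).symm
  have hAT_meas : Measurable fun u : ℕ → ℝ => ∑' i : {i : ℕ // J < i}, |u ↑i| * b ↑i := by
    have h : (fun u : ℕ → ℝ => ∑' i : {i : ℕ // J < i}, |u ↑i| * b ↑i)
        = fun u => (∑' i : {i : ℕ // J < i}, ENNReal.ofReal (|u ↑i| * b ↑i)).toReal :=
      funext fun u => tsum_nonneg_eq_toReal (fun i => mul_nonneg (abs_nonneg _) (hb _))
    rw [h]
    exact ENNReal.measurable_toReal.comp (Measurable.ennreal_tsum fun i =>
      by fun_prop)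
  have hF_meas : Measurable fun u : ℕ → ℝ =>
      (∑' i : {i : ℕ // J < i}, |u ↑i| * b ↑i) ^ 2 * rexp (c * ∑' i, |u i| * b i) :=
    (hAT_meas.pow_const 2).mul ((hA_meas.const_mul c).exp)
  -- pointwise bound
  have hpoint : ∀ u : ℕ → ℝ,
      ENNReal.ofReal ((∑' i : {i : ℕ // J < i}, |u ↑i| * b ↑i) ^ 2
          * rexp (c * ∑' i, |u i| * b i))
        ≤ ENNReal.ofReal β * ((∑' i : {i : ℕ // J < i}, ENNReal.ofReal (b ↑i * (u ↑i) ^ 2))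
          * ENNReal.ofReal (rexp (c * ∑' i, |u i| * b i))) := by
    intro u
    rw [ENNReal.ofReal_mul (sq_nonneg _),
      ENNReal.ofReal_pow (tsum_nonneg fun i => mul_nonneg (abs_nonneg _) (hb _))]
    have h1 : ENNReal.ofReal (∑' i : {i : ℕ // J < i}, |u ↑i| * b ↑i)
        ≤ ∑' i : {i : ℕ // J < i}, ENNReal.ofReal (|u ↑i| * b ↑i) := by
      rw [tsum_nonneg_eq_toReal (fun i => mul_nonneg (abs_nonneg _) (hb _))]
      exact ENNReal.ofReal_toReal_le
    have h2 : (∑' i : {i : ℕ // J < i}, ENNReal.ofReal (|u ↑i| * b ↑i)) ^ 2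
        ≤ (∑' i : {i : ℕ // J < i}, ENNReal.ofReal (b ↑i))
          * (∑' i : {i : ℕ // J < i}, ENNReal.ofReal (b ↑i * (u ↑i) ^ 2)) := by
      have hcs := tsum_cauchy_schwarz
        (fun i : {i : ℕ // J < i} => ENNReal.ofReal (Real.sqrt (b ↑i)))
        (fun i : {i : ℕ // J < i} => ENNReal.ofReal (Real.sqrt (b ↑i) * |u ↑i|))
      have e1 : ∀ i : {i : ℕ // J < i},
          ENNReal.ofReal (Real.sqrt (b ↑i)) * ENNReal.ofReal (Real.sqrt (b ↑i) * |u ↑i|)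
            = ENNReal.ofReal (|u ↑i| * b ↑i) := by
        intro i
        rw [← ENNReal.ofReal_mul (Real.sqrt_nonneg _)]
        congr 1
        rw [← mul_assoc, Real.mul_self_sqrt (hb _)]
        ring
      have e2 : ∀ i : {i : ℕ // J < i},
          ENNReal.ofReal (Real.sqrt (b ↑i)) ^ 2 = ENNReal.ofReal (b ↑i) := by
        intro i
        rw [← ENNReal.ofReal_pow (Real.sqrt_nonneg _), Real.sq_sqrt (hb _)]
      have e3 : ∀ i : {i : ℕ // J < i},
          ENNReal.ofReal (Real.sqrt (b ↑i) * |u ↑i|) ^ 2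
            = ENNReal.ofReal (b ↑i * (u ↑i) ^ 2) := by
        intro i
        rw [← ENNReal.ofReal_pow (mul_nonneg (Real.sqrt_nonneg _) (abs_nonneg _)), mul_pow,
          Real.sq_sqrt (hb _), sq_abs]
      simp_rw [e1, e2, e3] at hcs
      exact hcs
    calc ENNReal.ofReal (∑' i : {i : ℕ // J < i}, |u ↑i| * b ↑i) ^ 2
          * ENNReal.ofReal (rexp (c * ∑' i, |u i| * b i))
        ≤ ((∑' i : {i : ℕ // J < i}, ENNReal.ofReal (b ↑i))
            * (∑' i : {i : ℕ // J < i}, ENNReal.ofReal (b ↑i * (u ↑i) ^ 2)))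
          * ENNReal.ofReal (rexp (c * ∑' i, |u i| * b i)) :=
          mul_le_mul' (le_trans (pow_le_pow_left' h1 2) h2) le_rfl
      _ = ENNReal.ofReal β * ((∑' i : {i : ℕ // J < i}, ENNReal.ofReal (b ↑i * (u ↑i) ^ 2))
            * ENNReal.ofReal (rexp (c * ∑' i, |u i| * b i))) := by
          rw [hofβ, mul_assoc]
  -- main lintegral bound
  have hQi_meas : ∀ i : {i : ℕ // J < i}, Measurable fun u : ℕ → ℝ =>
      ENNReal.ofReal (b ↑i * (u ↑i) ^ 2) :=
    fun i => by fun_prop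
  have hQ_meas : Measurable fun u : ℕ → ℝ =>
      ∑' i : {i : ℕ // J < i}, ENNReal.ofReal (b ↑i * (u ↑i) ^ 2) :=
    Measurable.ennreal_tsum hQi_meas
  have key : (∫⁻ u, ENNReal.ofReal ((∑' i : {i : ℕ // J < i}, |u ↑i| * b ↑i) ^ 2
        * rexp (c * ∑' i, |u i| * b i)) ∂γ)
      ≤ ENNReal.ofReal β * (ENNReal.ofReal β * ENNReal.ofReal κ) := by
    calc (∫⁻ u, ENNReal.ofReal ((∑' i : {i : ℕ // J < i}, |u ↑i| * b ↑i) ^ 2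
          * rexp (c * ∑' i, |u i| * b i)) ∂γ)
        ≤ ∫⁻ u, ENNReal.ofReal β
            * ((∑' i : {i : ℕ // J < i}, ENNReal.ofReal (b ↑i * (u ↑i) ^ 2))
              * ENNReal.ofReal (rexp (c * ∑' i, |u i| * b i))) ∂γ := lintegral_mono hpoint
      _ = ENNReal.ofReal β * ∫⁻ u, (∑' i : {i : ℕ // J < i}, ENNReal.ofReal (b ↑i * (u ↑i) ^ 2))
              * ENNReal.ofReal (rexp (c * ∑' i, |u i| * b i)) ∂γ :=
          lintegral_const_mul _ (hQ_meas.mul hE_meas)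
      _ = ENNReal.ofReal β * ∑' i : {i : ℕ // J < i},
            ∫⁻ u, ENNReal.ofReal (b ↑i * (u ↑i) ^ 2)
              * ENNReal.ofReal (rexp (c * ∑' j, |u j| * b j)) ∂γ := by
          congr 1
          rw [show (fun u : ℕ → ℝ => (∑' i : {i : ℕ // J < i}, ENNReal.ofReal (b ↑i * (u ↑i) ^ 2))
              * ENNReal.ofReal (rexp (c * ∑' i, |u i| * b i)))
            = fun u => ∑' i : {i : ℕ // J < i}, ENNReal.ofReal (b ↑i * (u ↑i) ^ 2)
              * ENNReal.ofReal (rexp (c * ∑' j, |u j| * b j)) from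
            funext fun u => ENNReal.tsum_mul_right.symm]
          exact lintegral_tsum fun i => ((hQi_meas i).mul hE_meas).aemeasurable
      _ ≤ ENNReal.ofReal β * ∑' i : {i : ℕ // J < i}, ENNReal.ofReal (b ↑i) * ENNReal.ofReal κ :=
          mul_le_mul_right (ENNReal.tsum_le_tsum fun i : {i : ℕ // J < i} => hterm ↑i) _
      _ = ENNReal.ofReal β * (ENNReal.ofReal β * ENNReal.ofReal κ) := by
          rw [ENNReal.tsum_mul_right, hofβ]
  rw [integral_eq_lintegral_of_nonneg_ae (ae_of_all _ fun u => by positivity)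
    hF_meas.aestronglyMeasurable]
  refine le_trans (ENNReal.toReal_mono ?_ key) ?_
  · exact ENNReal.mul_ne_top ENNReal.ofReal_ne_top
      (ENNReal.mul_ne_top ENNReal.ofReal_ne_top ENNReal.ofReal_ne_top)
  · rw [ENNReal.toReal_mul, ENNReal.toReal_mul, ENNReal.toReal_ofReal hβ0,
      ENNReal.toReal_ofReal hκ0, ← hβ]
    nlinarith [sq_nonneg β]
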